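/- Suppose M : ℝ → ℝ is locally integrable with |M(t)| ≤ C₀ |t|^{-β} for |t| ≥ 1, a : ℝ → ℝ is bounded with |a(u)| ≤ C₀ |u|^{-γ} for |u| ≥ 1, where β > 1/4, γ > 0, 2β + γ > 3/2, β + γ > 1. Then T^{-1/2} ∫_0^T ∫_0^T M(t) M(s) a(t-s) dt ds → 0 as T → ∞. -/

import Mathlib

open MeasureTheory Real Filter Set

lemma rpow_integrableOn_Ioc {p : ℝ} (hp : -1 < p) (a b : ℝ) :
    IntegrableOn (fun x : ℝ => x ^ p) (Ioc a b) volume :=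
  (intervalIntegral.intervalIntegrable_rpow' (a := a) (b := b) hp).1

lemma abs_sub_rpow_intervalIntegrable {p : ℝ} (hp : -1 < p) (t : ℝ) (a b : ℝ) :
    IntervalIntegrable (fun s : ℝ => |t - s| ^ p) volume a b := by
  suffices H : ∀ c : ℝ, IntervalIntegrable (fun s : ℝ => |t - s| ^ p) volume t c by
    exact (H a).symm.trans (H b)
  intro c
  rcases le_total t c with h | h
  · rw [intervalIntegrable_iff, uIoc_of_le h]
    have h1 : IntervalIntegrable (fun s : ℝ => (s - t) ^ p) volume (0 + t) ((c - t) + t) :=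
      (intervalIntegral.intervalIntegrable_rpow' (a := 0) (b := c - t) hp).comp_sub_right t
    rw [zero_add, sub_add_cancel] at h1
    have h2 : IntegrableOn (fun s : ℝ => (s - t) ^ p) (Ioc t c) volume := by
      rw [intervalIntegrable_iff, uIoc_of_le h] at h1; exact h1
    exact h2.congr_fun (fun s hs => by
      rw [abs_sub_comm, abs_of_nonneg (by linarith [hs.1] : (0:ℝ) ≤ s - t)]) measurableSet_Ioc
  · rw [intervalIntegrable_iff, uIoc_of_ge h]
    have h1 : IntervalIntegrable (fun s : ℝ => (t - s) ^ p) volume (t - 0) (t - (t - c)) :=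
      (intervalIntegral.intervalIntegrable_rpow' (a := 0) (b := t - c) hp).comp_sub_left t
    rw [sub_zero, sub_sub_cancel] at h1
    have h2 : IntegrableOn (fun s : ℝ => (t - s) ^ p) (Ioc c t) volume := by
      rw [intervalIntegrable_iff, uIoc_of_ge h] at h1; exact h1
    exact h2.congr_fun (fun s hs => by
      rw [abs_of_nonneg (by linarith [hs.2] : (0:ℝ) ≤ t - s)]) measurableSet_Ioc

lemma integral_abs_sub_rpow {p : ℝ} (hp : -1 < p) {t : ℝ} (ht : 0 ≤ t) :
    ∫ s in Ioc (0:ℝ) (2*t), |t - s| ^ p = 2 * t ^ (p+1) / (p+1) := by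
  rw [← intervalIntegral.integral_of_le (by linarith : (0:ℝ) ≤ 2*t)]
  have hsplit := intervalIntegral.integral_add_adjacent_intervals
    (abs_sub_rpow_intervalIntegrable hp t 0 t) (abs_sub_rpow_intervalIntegrable hp t t (2*t))
  rw [← hsplit]
  have e1 : ∫ s in (0:ℝ)..t, |t - s| ^ p = t ^ (p+1) / (p+1) := by
    rw [intervalIntegral.integral_congr (g := fun s => (t - s) ^ p)
      (fun s hs => by
        rw [uIcc_of_le ht] at hs
        rw [abs_of_nonneg (by linarith [hs.2] : (0:ℝ) ≤ t - s)]),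
      intervalIntegral.integral_comp_sub_left (fun u => u ^ p) t, sub_self, sub_zero,
      integral_rpow (Or.inl hp), Real.zero_rpow (by linarith), sub_zero]
  have e2 : ∫ s in t..(2*t), |t - s| ^ p = t ^ (p+1) / (p+1) := by
    rw [intervalIntegral.integral_congr (g := fun s => (s - t) ^ p)
      (fun s hs => by
        rw [uIcc_of_le (by linarith : t ≤ 2*t)] at hs
        rw [abs_sub_comm, abs_of_nonneg (by linarith [hs.1] : (0:ℝ) ≤ s - t)]),
      intervalIntegral.integral_comp_sub_right (fun u => u ^ p) t, sub_self]
    have h2t : 2*t - t = t := by ring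
    rw [h2t, integral_rpow (Or.inl hp), Real.zero_rpow (by linarith), sub_zero]
  rw [e1, e2]; ring

lemma rpow_neg_le_of_half_le {x c q : ℝ} (hx : 0 < x) (hc : x/2 ≤ c) (hq : 0 ≤ q) :
    c ^ (-q) ≤ 2^q * x^(-q) := by
  have h2 : (0:ℝ) < x/2 := by linarith
  calc c ^ (-q) ≤ (x/2) ^ (-q) :=
        Real.rpow_le_rpow_of_nonpos h2 hc (neg_nonpos.mpr hq)
    _ = 2^q * x^(-q) := by
        rw [Real.div_rpow hx.le (by norm_num : (0:ℝ) ≤ 2),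
          Real.rpow_neg (by norm_num : (0:ℝ) ≤ 2), div_eq_mul_inv, inv_inv]
        ring

set_option maxHeartbeats 2000000 in
theorem MM_term_tendsto_zero (β γ C₀ : ℝ) (hβ : 1/4 < β) (hγ : 0 < γ)
    (h1 : 3/2 < 2 * β + γ) (h2 : 1 < β + γ) (hC₀ : 0 < C₀)
    (M a : ℝ → ℝ) (hM : LocallyIntegrable M) (ha : Measurable a)
    (haBdd : ∃ A : ℝ, ∀ u : ℝ, |a u| ≤ A)
    (hMb : ∀ t : ℝ, 1 ≤ |t| → |M t| ≤ C₀ * |t| ^ (-β))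
    (hab : ∀ u : ℝ, 1 ≤ |u| → |a u| ≤ C₀ * |u| ^ (-γ)) :
    Tendsto (fun T : ℝ =>
        T ^ (-(1/2 : ℝ)) * ∫ t in (0:ℝ)..T, ∫ s in (0:ℝ)..T, M t * M s * a (t - s))
      atTop (nhds 0) := by
  obtain ⟨A, hA⟩ := haBdd
  obtain ⟨A', hA'def⟩ : ∃ x : ℝ, x = max A C₀ := ⟨_, rfl⟩
  have hA'pos : 0 < A' := by rw [hA'def]; exact lt_of_lt_of_le hC₀ (le_max_right _ _)
  have hC₀A' : C₀ ≤ A' := by rw [hA'def]; exact le_max_right A C₀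
  have haA' : ∀ u, |a u| ≤ A' := by
    intro u; rw [hA'def]; exact (hA u).trans (le_max_left _ _)
  set g : ℝ → ℝ := fun u => if 1 ≤ |u| then C₀ * |u| ^ (-γ) else A' with hgdef
  have hg_meas : Measurable g := by
    apply Measurable.ite (measurableSet_le measurable_const measurable_id.abs)
    · exact (measurable_id.abs.pow_const _).const_mul _
    · exact measurable_const
  have hg_nonneg : ∀ u, 0 ≤ g u := by
    intro u; rw [hgdef]; dsimp only; split
    · positivity
    · exact hA'pos.le
  have hg_le_A' : ∀ u, g u ≤ A' := by
    intro u; rw [hgdef]; dsimp only; split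
    · rename_i h
      calc C₀ * |u| ^ (-γ) ≤ C₀ * 1 := by
            apply mul_le_mul_of_nonneg_left _ hC₀.le
            exact Real.rpow_le_one_of_one_le_of_nonpos h (by linarith)
        _ ≤ A' := by rw [mul_one]; exact hC₀A'
    · exact le_refl _
  have hag : ∀ u, |a u| ≤ g u := by
    intro u; rw [hgdef]; dsimp only; split
    · rename_i h; exact hab u h
    · exact haA' u
  have hg_decay : ∀ u : ℝ, 1 ≤ |u| → g u = C₀ * |u| ^ (-γ) := by
    intro u h; rw [hgdef]; dsimp only; rw [if_pos h]
  -- exponents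
  obtain ⟨e, hedef⟩ : ∃ x : ℝ, x = max (max (1 - 2*β) (2 - 2*β - γ)) (1/4) := ⟨_, rfl⟩
  obtain ⟨ρ, hρdef⟩ : ∃ x : ℝ, x = (e + 1/2)/2 := ⟨_, rfl⟩
  have he1 : 1 - 2*β ≤ e := by rw [hedef]; exact le_max_of_le_left (le_max_left _ _)
  have he2 : 2 - 2*β - γ ≤ e := by rw [hedef]; exact le_max_of_le_left (le_max_right _ _)
  have he3 : (1/4 : ℝ) ≤ e := by rw [hedef]; exact le_max_right _ _
  have he4 : e < 1/2 := by
    rw [hedef]; apply max_lt (max_lt (by linarith) (by linarith)) (by norm_num)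
  have hρ1 : 1 - 2*β < ρ := by rw [hρdef]; linarith
  have hρ2 : 2 - 2*β - γ < ρ := by rw [hρdef]; linarith
  have hρ3 : 0 < ρ := by rw [hρdef]; linarith
  have hρ4 : ρ < 1/2 := by rw [hρdef]; linarith
  obtain ⟨δ, hδdef⟩ : ∃ x : ℝ, x = β + γ + ρ - 1 := ⟨_, rfl⟩
  obtain ⟨δ₂, hδ₂def⟩ : ∃ x : ℝ, x = ρ - 1 + 2*β := ⟨_, rfl⟩
  have hδpos : 0 < δ := by rw [hδdef]; linarith
  have hδ₂pos : 0 < δ₂ := by rw [hδ₂def]; linarith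
  have hβγ : 0 < β + γ - 1 := by linarith
  -- integrability of M
  have hMin : ∀ c d : ℝ, IntegrableOn M (Ioc c d) volume := fun c d =>
    (hM.integrableOn_isCompact isCompact_Icc).mono_set Ioc_subset_Icc_self
  have hMabs : ∀ c d : ℝ, IntegrableOn (fun s => |M s|) (Ioc c d) volume := fun c d =>
    (hMin c d).abs
  obtain ⟨K, hKdef⟩ : ∃ x : ℝ, x = ∫ s in Ioc (0:ℝ) 1, |M s| := ⟨_, rfl⟩
  obtain ⟨K₂, hK₂def⟩ : ∃ x : ℝ, x = ∫ s in Ioc (0:ℝ) 2, |M s| := ⟨_, rfl⟩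
  have hK0 : 0 ≤ K := by
    rw [hKdef]; exact setIntegral_nonneg measurableSet_Ioc (fun s _ => abs_nonneg _)
  have hK₂0 : 0 ≤ K₂ := by
    rw [hK₂def]; exact setIntegral_nonneg measurableSet_Ioc (fun s _ => abs_nonneg _)
  obtain ⟨Csmall, hCsmalldef⟩ : ∃ x : ℝ, x = K₂ * A' + 2^γ * C₀^2 * (1/(β+γ-1)) := ⟨_, rfl⟩
  have h2γ : (0:ℝ) < 2^γ := Real.rpow_pos_of_pos (by norm_num) _
  have h2β : (0:ℝ) < 2^β := Real.rpow_pos_of_pos (by norm_num) _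
  have h2β1 : (0:ℝ) < 2^(β+1) := Real.rpow_pos_of_pos (by norm_num) _
  have hCsmall0 : 0 ≤ Csmall := by
    rw [hCsmalldef]
    have hx : (0:ℝ) ≤ 1/(β+γ-1) := by positivity
    have := mul_nonneg hK₂0 hA'pos.le
    nlinarith [mul_nonneg (mul_nonneg h2γ.le (sq_nonneg C₀)) hx]
  obtain ⟨C₃, hC₃def⟩ : ∃ x : ℝ, x = C₀ * (2^γ*A'*K + 2^(β+1)*C₀*A' + 2^γ*C₀^2/δ + 2^(β+1)*C₀^2/δ₂
      + 2^γ*C₀^2*(1/(β+γ-1))) := ⟨_, rfl⟩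
  have hC₃0 : 0 ≤ C₃ := by
    rw [hC₃def]
    apply mul_nonneg hC₀.le
    have t1 : (0:ℝ) ≤ 2^γ*A'*K := mul_nonneg (mul_nonneg h2γ.le hA'pos.le) hK0
    have t2 : (0:ℝ) ≤ 2^(β+1)*C₀*A' := mul_nonneg (mul_nonneg h2β1.le hC₀.le) hA'pos.le
    have t3 : (0:ℝ) ≤ 2^γ*C₀^2/δ := by positivity
    have t4 : (0:ℝ) ≤ 2^(β+1)*C₀^2/δ₂ := by positivity
    have t5 : (0:ℝ) ≤ 2^γ*C₀^2*(1/(β+γ-1)) := by positivity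
    linarith
  obtain ⟨C₄, hC₄def⟩ : ∃ x : ℝ, x = K * Csmall + C₃/ρ := ⟨_, rfl⟩
  have hC₄0 : 0 ≤ C₄ := by
    rw [hC₄def]
    exact add_nonneg (mul_nonneg hK0 hCsmall0) (div_nonneg hC₃0 hρ3.le)
  -- main bound
  have main : ∀ T : ℝ, 2 ≤ T →
      |∫ t in (0:ℝ)..T, ∫ s in (0:ℝ)..T, M t * M s * a (t - s)| ≤ C₄ * T^ρ := by
    intro T hT
    have hT0 : (0:ℝ) < T := by linarith
    have hT1 : (1:ℝ) ≤ T := by linarith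
    have hMg : ∀ (t c d : ℝ), IntegrableOn (fun s => |M s| * g (t - s)) (Ioc c d) volume := by
      intro t c d
      have hb : ∀ s : ℝ, ‖g (t - s)‖ ≤ A' := fun s => by
        rw [Real.norm_eq_abs, abs_of_nonneg (hg_nonneg _)]; exact hg_le_A' _
      have := (hMabs c d).bdd_mul
        ((hg_meas.comp (measurable_const.sub measurable_id)).aestronglyMeasurable) (ae_of_all _ hb)
      exact this.congr (ae_of_all _ fun s => mul_comm _ _)
    set Φ : ℝ → ℝ := fun t => ∫ s in Ioc (0:ℝ) T, |M s| * g (t - s) with hΦdef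
    have hΦ_nonneg : ∀ t, 0 ≤ Φ t := fun t =>
      setIntegral_nonneg measurableSet_Ioc fun s _ => mul_nonneg (abs_nonneg _) (hg_nonneg _)
    have inner_bound : ∀ t : ℝ, |∫ s in (0:ℝ)..T, M t * M s * a (t - s)| ≤ |M t| * Φ t := by
      intro t
      rw [intervalIntegral.integral_of_le hT0.le]
      have hfac : ∫ s in Ioc (0:ℝ) T, M t * M s * a (t - s)
          = M t * ∫ s in Ioc (0:ℝ) T, M s * a (t - s) := by
        rw [← integral_const_mul]
        congr 1; ext s; ring
      rw [hfac, abs_mul]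
      apply mul_le_mul_of_nonneg_left _ (abs_nonneg _)
      rw [hΦdef, ← Real.norm_eq_abs]
      apply norm_integral_le_of_norm_le (hMg t 0 T)
      apply ae_of_all
      intro s
      rw [Real.norm_eq_abs, abs_mul]
      exact mul_le_mul_of_nonneg_left (hag _) (abs_nonneg _)
    -- small t bound
    have Φ_small : ∀ t ∈ Ioc (0:ℝ) 1, Φ t ≤ Csmall := by
      rintro t ⟨ht0, ht1⟩
      have hsplit : Φ t = (∫ s in Ioc (0:ℝ) 2, |M s| * g (t - s))
          + ∫ s in Ioc (2:ℝ) T, |M s| * g (t - s) := by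
        rw [hΦdef]
        dsimp only
        rw [← Ioc_union_Ioc_eq_Ioc (by norm_num : (0:ℝ) ≤ 2) hT,
          setIntegral_union (Ioc_disjoint_Ioc_of_le le_rfl) measurableSet_Ioc (hMg t 0 2) (hMg t 2 T)]
      rw [hsplit]
      have b1 : (∫ s in Ioc (0:ℝ) 2, |M s| * g (t - s)) ≤ K₂ * A' := by
        calc (∫ s in Ioc (0:ℝ) 2, |M s| * g (t - s))
            ≤ ∫ s in Ioc (0:ℝ) 2, |M s| * A' := by
              apply setIntegral_mono_on (hMg t 0 2) ((hMabs 0 2).mul_const A') measurableSet_Ioc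
              intro s _; exact mul_le_mul_of_nonneg_left (hg_le_A' _) (abs_nonneg _)
          _ = K₂ * A' := by rw [integral_mul_const, hK₂def]
      have b2 : (∫ s in Ioc (2:ℝ) T, |M s| * g (t - s)) ≤ 2^γ * C₀^2 * (1/(β+γ-1)) := by
        have hIoi : IntegrableOn (fun s : ℝ => s^(-(β+γ))) (Ioi (1:ℝ)) volume :=
          integrableOn_Ioi_rpow_of_lt (by linarith) one_pos
        have hptw : ∀ s ∈ Ioc (2:ℝ) T, |M s| * g (t - s) ≤ 2^γ*C₀^2 * s^(-(β+γ)) := by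
          rintro s ⟨hs2, hsT⟩
          have hs0 : (0:ℝ) < s := by linarith
          have hMs : |M s| ≤ C₀ * s^(-β) := by
            have := hMb s (by rw [abs_of_pos hs0]; linarith)
            rwa [abs_of_pos hs0] at this
          have habs : |t - s| = s - t := by
            rw [abs_sub_comm, abs_of_pos (by linarith : (0:ℝ) < s - t)]
          have hts1 : (1:ℝ) ≤ |t - s| := by rw [habs]; linarith
          have hgb : g (t - s) ≤ C₀ * (2^γ * s^(-γ)) := by
            rw [hg_decay _ hts1, habs]
            apply mul_le_mul_of_nonneg_left _ hC₀.le
            exact rpow_neg_le_of_half_le hs0 (by linarith) hγ.le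
          calc |M s| * g (t - s) ≤ (C₀ * s^(-β)) * (C₀ * (2^γ * s^(-γ))) :=
                mul_le_mul hMs hgb (hg_nonneg _) (by positivity)
            _ = 2^γ*C₀^2 * s^(-(β+γ)) := by
                rw [show (-(β+γ) : ℝ) = -β + -γ by ring, Real.rpow_add hs0]; ring
        calc (∫ s in Ioc (2:ℝ) T, |M s| * g (t - s))
            ≤ ∫ s in Ioc (2:ℝ) T, 2^γ*C₀^2 * s^(-(β+γ)) := by
              apply setIntegral_mono_on (hMg t 2 T) _ measurableSet_Ioc hptw
              exact (hIoi.mono_set (Ioc_subset_Ioi_self.trans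
                (Ioi_subset_Ioi (by norm_num)))).const_mul _
          _ = 2^γ*C₀^2 * ∫ s in Ioc (2:ℝ) T, s^(-(β+γ)) := integral_const_mul _ _
          _ ≤ 2^γ*C₀^2 * ∫ s in Ioi (1:ℝ), s^(-(β+γ)) := by
              apply mul_le_mul_of_nonneg_left _ (by positivity)
              apply setIntegral_mono_set hIoi
              · apply (ae_restrict_iff' measurableSet_Ioi).2
                exact ae_of_all _ fun s hs => Real.rpow_nonneg
                  (by linarith [hs.out] : (0:ℝ) ≤ s) _
              · exact HasSubset.Subset.eventuallyLE
                  (Ioc_subset_Ioi_self.trans (Ioi_subset_Ioi (by norm_num)))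
          _ = 2^γ*C₀^2 * (1/(β+γ-1)) := by
              rw [integral_Ioi_rpow_of_lt (by linarith) one_pos, Real.one_rpow]
              congr 1
              have hne : β+γ-1 ≠ 0 := ne_of_gt hβγ
              have hne2 : -(β+γ)+1 ≠ 0 := by intro h; apply hne; linarith
              field_simp
              ring
      rw [hCsmalldef]; linarith
    -- large t bound
    have Φ_big : ∀ t ∈ Ioc (1:ℝ) T,
        Φ t ≤ 2^γ*A'*K*t^(-γ) + 2^β*C₀*A'*t^(-β)*2 + 2^γ*C₀^2*t^(-γ)*(t^δ/δ)
          + 2^β*C₀^2*t^(-β)*(2*t^δ₂/δ₂) + 2^γ*C₀^2*(t^(-(β+γ)+1)*(1/(β+γ-1))) := by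
      rintro t ⟨ht1, htT⟩
      have ht0 : (0:ℝ) < t := by linarith
      have hsplit : Φ t = (∫ s in Ioc (0:ℝ) 1, |M s| * g (t - s))
          + ∫ s in Ioc (1:ℝ) T, |M s| * g (t - s) := by
        rw [hΦdef]; dsimp only
        rw [← Ioc_union_Ioc_eq_Ioc (by norm_num : (0:ℝ) ≤ 1) hT1,
          setIntegral_union (Ioc_disjoint_Ioc_of_le le_rfl) measurableSet_Ioc (hMg t 0 1) (hMg t 1 T)]
      -- first piece
      have b1 : (∫ s in Ioc (0:ℝ) 1, |M s| * g (t - s)) ≤ 2^γ*A'*K*t^(-γ) := by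
        have hptw : ∀ s ∈ Ioc (0:ℝ) 1, |M s| * g (t - s) ≤ |M s| * (2^γ*A'*t^(-γ)) := by
          rintro s ⟨hs0, hs1⟩
          apply mul_le_mul_of_nonneg_left _ (abs_nonneg _)
          rcases le_or_gt t 2 with ht2 | ht2
          · have hone : (1:ℝ) ≤ 2^γ * t^(-γ) := by
              have hmono : (2:ℝ)^(-γ) ≤ t^(-γ) :=
                Real.rpow_le_rpow_of_nonpos ht0 ht2 (by linarith)
              calc (1:ℝ) = 2^γ * 2^(-γ) := by
                    rw [← Real.rpow_add (by norm_num : (0:ℝ) < 2)]; simp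
                _ ≤ 2^γ * t^(-γ) := mul_le_mul_of_nonneg_left hmono h2γ.le
            calc g (t - s) ≤ A' := hg_le_A' _
              _ = A' * 1 := (mul_one _).symm
              _ ≤ A' * (2^γ * t^(-γ)) := mul_le_mul_of_nonneg_left hone hA'pos.le
              _ = 2^γ*A'*t^(-γ) := by ring
          · have hts : |t - s| = t - s := abs_of_pos (by linarith)
            have hts1 : (1:ℝ) ≤ |t - s| := by rw [hts]; linarith
            rw [hg_decay _ hts1, hts]
            calc C₀ * (t-s)^(-γ) ≤ C₀ * (2^γ * t^(-γ)) :=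
                  mul_le_mul_of_nonneg_left
                    (rpow_neg_le_of_half_le ht0 (by linarith) hγ.le) hC₀.le
              _ ≤ A' * (2^γ * t^(-γ)) :=
                  mul_le_mul_of_nonneg_right hC₀A' (by positivity)
              _ = 2^γ*A'*t^(-γ) := by ring
        calc (∫ s in Ioc (0:ℝ) 1, |M s| * g (t - s))
            ≤ ∫ s in Ioc (0:ℝ) 1, |M s| * (2^γ*A'*t^(-γ)) :=
              setIntegral_mono_on (hMg t 0 1) ((hMabs 0 1).mul_const _)
                measurableSet_Ioc hptw
          _ = 2^γ*A'*K*t^(-γ) := by rw [integral_mul_const, hKdef]; ring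
      -- second piece
      obtain ⟨c₁, hc₁def⟩ : ∃ x : ℝ, x = 2^β*C₀*A'*t^(-β) := ⟨_, rfl⟩
      obtain ⟨c₂, hc₂def⟩ : ∃ x : ℝ, x = 2^γ*C₀^2*t^(-γ) := ⟨_, rfl⟩
      obtain ⟨c₃, hc₃def⟩ : ∃ x : ℝ, x = 2^β*C₀^2*t^(-β) := ⟨_, rfl⟩
      obtain ⟨c₄, hc₄def⟩ : ∃ x : ℝ, x = 2^γ*C₀^2 := ⟨_, rfl⟩
      have hc₁0 : 0 ≤ c₁ := by
        rw [hc₁def]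
        exact mul_nonneg (mul_nonneg (mul_nonneg h2β.le hC₀.le) hA'pos.le)
          (Real.rpow_nonneg ht0.le _)
      have hc₂0 : 0 ≤ c₂ := by rw [hc₂def]; positivity
      have hc₃0 : 0 ≤ c₃ := by rw [hc₃def]; positivity
      have hc₄0 : 0 ≤ c₄ := by rw [hc₄def]; positivity
      have hi₁ : IntegrableOn (fun s : ℝ =>
          c₁ * indicator (Icc (t-1) (t+1)) (fun _ => (1:ℝ)) s) (Ioc 1 T) volume :=
        (((integrableOn_const (C := (1:ℝ))
          measure_Ioc_lt_top.ne)).indicator measurableSet_Icc).const_mul _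
      have hi₂ : IntegrableOn (fun s : ℝ =>
          c₂ * indicator (Iic (t/2)) (fun s => s^(δ-1)) s) (Ioc 1 T) volume :=
        (((rpow_integrableOn_Ioc (by linarith) 1 T)).indicator measurableSet_Iic).const_mul _
      have hi₃ : IntegrableOn (fun s : ℝ =>
          c₃ * indicator (Iic (2*t)) (fun s => |t - s|^(δ₂-1)) s) (Ioc 1 T) volume :=
        (((abs_sub_rpow_intervalIntegrable (by linarith) t 1 T).1).indicator
          measurableSet_Iic).const_mul _
      have hi₄ : IntegrableOn (fun s : ℝ =>
          c₄ * indicator (Ici (2*t)) (fun s => s^(-(β+γ))) s) (Ioc 1 T) volume :=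
        (((integrableOn_Ioi_rpow_of_lt (by linarith) one_pos).mono_set
          Ioc_subset_Ioi_self).indicator measurableSet_Ici).const_mul _
      have hptw2 : ∀ s ∈ Ioc (1:ℝ) T,
          |M s| * g (t - s) ≤ c₁ * indicator (Icc (t-1) (t+1)) (fun _ => (1:ℝ)) s
            + c₂ * indicator (Iic (t/2)) (fun s => s^(δ-1)) s
            + c₃ * indicator (Iic (2*t)) (fun s => |t - s|^(δ₂-1)) s
            + c₄ * indicator (Ici (2*t)) (fun s => s^(-(β+γ))) s := by
        rintro s ⟨hs1, hsT⟩
        have hs0 : (0:ℝ) < s := by linarith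
        have hn₁ : 0 ≤ c₁ * indicator (Icc (t-1) (t+1)) (fun _ => (1:ℝ)) s :=
          mul_nonneg hc₁0 (indicator_apply_nonneg fun _ => zero_le_one)
        have hn₂ : 0 ≤ c₂ * indicator (Iic (t/2)) (fun s => s^(δ-1)) s :=
          mul_nonneg hc₂0 (indicator_apply_nonneg fun _ => Real.rpow_nonneg hs0.le _)
        have hn₃ : 0 ≤ c₃ * indicator (Iic (2*t)) (fun s => |t - s|^(δ₂-1)) s :=
          mul_nonneg hc₃0 (indicator_apply_nonneg fun _ => Real.rpow_nonneg (abs_nonneg _) _)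
        have hn₄ : 0 ≤ c₄ * indicator (Ici (2*t)) (fun s => s^(-(β+γ))) s :=
          mul_nonneg hc₄0 (indicator_apply_nonneg fun _ => Real.rpow_nonneg hs0.le _)
        have hMs : |M s| ≤ C₀ * s^(-β) := by
          have := hMb s (by rw [abs_of_pos hs0]; linarith)
          rwa [abs_of_pos hs0] at this
        have hW : |M s| * g (t - s) ≤ (C₀ * s^(-β)) * g (t - s) :=
          mul_le_mul_of_nonneg_right hMs (hg_nonneg _)
        rcases le_or_gt (|t - s|) 1 with hc | hc
        · -- near diagonal : term 1
          have hmem : s ∈ Icc (t-1) (t+1) := by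
            rw [abs_le] at hc; constructor <;> linarith [hc.1, hc.2]
          have hsge : t/2 ≤ s := by
            rcases le_or_gt t 2 with h | h
            · linarith
            · rw [abs_le] at hc; linarith [hc.2]
          have hterm : |M s| * g (t - s) ≤ c₁ * indicator (Icc (t-1) (t+1))
              (fun _ => (1:ℝ)) s := by
            rw [indicator_of_mem hmem, mul_one, hc₁def]
            calc |M s| * g (t - s) ≤ (C₀ * s^(-β)) * g (t - s) := hW
              _ ≤ (C₀ * (2^β * t^(-β))) * A' := by
                  apply mul_le_mul _ (hg_le_A' _) (hg_nonneg _) (by positivity)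
                  exact mul_le_mul_of_nonneg_left
                    (rpow_neg_le_of_half_le ht0 hsge (by linarith)) hC₀.le
              _ = 2^β*C₀*A'*t^(-β) := by ring
          linarith
        · have hts1 : (1:ℝ) ≤ |t - s| := hc.le
          have hgval : g (t - s) = C₀ * |t - s|^(-γ) := hg_decay _ hts1
          rcases le_or_gt s (t/2) with hs2 | hs2
          · -- term 2
            have hterm : |M s| * g (t - s) ≤ c₂ * indicator (Iic (t/2))
                (fun s => s^(δ-1)) s := by
              rw [indicator_of_mem (mem_Iic.mpr hs2), hc₂def]
              have hsb : s^(-β) ≤ s^(δ-1) :=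
                Real.rpow_le_rpow_of_exponent_le hs1.le (by rw [hδdef]; linarith)
              have htb : |t - s|^(-γ) ≤ 2^γ * t^(-γ) := by
                apply rpow_neg_le_of_half_le ht0 _ hγ.le
                rw [abs_of_pos (by linarith : (0:ℝ) < t - s)]
                linarith
              calc |M s| * g (t - s) ≤ (C₀ * s^(-β)) * g (t - s) := hW
                _ = (C₀ * s^(-β)) * (C₀ * |t - s|^(-γ)) := by rw [hgval]
                _ ≤ (C₀ * s^(δ-1)) * (C₀ * (2^γ * t^(-γ))) := by
                    apply mul_le_mul
                    · exact mul_le_mul_of_nonneg_left hsb hC₀.le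
                    · exact mul_le_mul_of_nonneg_left htb hC₀.le
                    · positivity
                    · positivity
                _ = 2^γ*C₀^2*t^(-γ) * s^(δ-1) := by ring
            linarith
          · rcases le_or_gt s (2*t) with hs3 | hs3
            · -- term 3
              have hterm : |M s| * g (t - s) ≤ c₃ * indicator (Iic (2*t))
                  (fun s => |t - s|^(δ₂-1)) s := by
                rw [indicator_of_mem (mem_Iic.mpr hs3), hc₃def]
                have hsb : s^(-β) ≤ 2^β * t^(-β) :=
                  rpow_neg_le_of_half_le ht0 hs2.le (by linarith)
                have htb : |t - s|^(-γ) ≤ |t - s|^(δ₂-1) :=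
                  Real.rpow_le_rpow_of_exponent_le hts1 (by rw [hδ₂def]; linarith)
                calc |M s| * g (t - s) ≤ (C₀ * s^(-β)) * g (t - s) := hW
                  _ = (C₀ * s^(-β)) * (C₀ * |t - s|^(-γ)) := by rw [hgval]
                  _ ≤ (C₀ * (2^β * t^(-β))) * (C₀ * |t - s|^(δ₂-1)) := by
                      apply mul_le_mul
                      · exact mul_le_mul_of_nonneg_left hsb hC₀.le
                      · exact mul_le_mul_of_nonneg_left htb hC₀.le
                      · positivity
                      · positivity
                  _ = 2^β*C₀^2*t^(-β) * |t - s|^(δ₂-1) := by ring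
              linarith
            · -- term 4
              have hterm : |M s| * g (t - s) ≤ c₄ * indicator (Ici (2*t))
                  (fun s => s^(-(β+γ))) s := by
                rw [indicator_of_mem (mem_Ici.mpr hs3.le), hc₄def]
                have htb : |t - s|^(-γ) ≤ 2^γ * s^(-γ) := by
                  apply rpow_neg_le_of_half_le hs0 _ hγ.le
                  rw [abs_sub_comm, abs_of_pos (by linarith : (0:ℝ) < s - t)]
                  linarith
                calc |M s| * g (t - s) ≤ (C₀ * s^(-β)) * g (t - s) := hW
                  _ = (C₀ * s^(-β)) * (C₀ * |t - s|^(-γ)) := by rw [hgval]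
                  _ ≤ (C₀ * s^(-β)) * (C₀ * (2^γ * s^(-γ))) := by
                      apply mul_le_mul_of_nonneg_left
                        (mul_le_mul_of_nonneg_left htb hC₀.le) (by positivity)
                  _ = 2^γ*C₀^2 * s^(-(β+γ)) := by
                      rw [show (-(β+γ) : ℝ) = -β + -γ by ring, Real.rpow_add hs0]; ring
              linarith
      -- integral of the majorant
      have e₁ : (∫ s in Ioc (1:ℝ) T, c₁ * indicator (Icc (t-1) (t+1)) (fun _ => (1:ℝ)) s)
          ≤ c₁ * 2 := by
        rw [integral_const_mul, setIntegral_indicator measurableSet_Icc]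
        apply mul_le_mul_of_nonneg_left _ hc₁0
        rw [setIntegral_const, smul_eq_mul, mul_one]
        apply ENNReal.toReal_le_of_le_ofReal (by norm_num)
        calc volume (Ioc 1 T ∩ Icc (t-1) (t+1)) ≤ volume (Icc (t-1) (t+1)) :=
              measure_mono inter_subset_right
          _ = ENNReal.ofReal 2 := by rw [Real.volume_Icc]; congr 1; ring
      have e₂ : (∫ s in Ioc (1:ℝ) T, c₂ * indicator (Iic (t/2)) (fun s => s^(δ-1)) s)
          ≤ c₂ * (t^δ/δ) := by
        rw [integral_const_mul, setIntegral_indicator measurableSet_Iic]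
        apply mul_le_mul_of_nonneg_left _ hc₂0
        calc (∫ s in Ioc (1:ℝ) T ∩ Iic (t/2), s^(δ-1))
            ≤ ∫ s in Ioc (0:ℝ) t, s^(δ-1) := by
              apply setIntegral_mono_set (rpow_integrableOn_Ioc (by linarith) 0 t)
              · apply (ae_restrict_iff' measurableSet_Ioc).2
                exact ae_of_all _ fun s hs => Real.rpow_nonneg hs.1.le _
              · apply HasSubset.Subset.eventuallyLE
                rintro s ⟨⟨hs1, _⟩, (hs2 : s ≤ t/2)⟩
                exact ⟨by linarith, by linarith⟩
          _ = t^δ/δ := by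
              rw [← intervalIntegral.integral_of_le ht0.le, integral_rpow (Or.inl (by linarith))]
              rw [show δ - 1 + 1 = δ by ring, Real.zero_rpow (ne_of_gt hδpos), sub_zero]
      have e₃ : (∫ s in Ioc (1:ℝ) T, c₃ * indicator (Iic (2*t)) (fun s => |t - s|^(δ₂-1)) s)
          ≤ c₃ * (2*t^δ₂/δ₂) := by
        rw [integral_const_mul, setIntegral_indicator measurableSet_Iic]
        apply mul_le_mul_of_nonneg_left _ hc₃0
        calc (∫ s in Ioc (1:ℝ) T ∩ Iic (2*t), |t - s|^(δ₂-1))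
            ≤ ∫ s in Ioc (0:ℝ) (2*t), |t - s|^(δ₂-1) := by
              apply setIntegral_mono_set ((abs_sub_rpow_intervalIntegrable
                (by linarith) t 0 (2*t)).1)
              · exact ae_of_all _ fun s => Real.rpow_nonneg (abs_nonneg _) _
              · apply HasSubset.Subset.eventuallyLE
                rintro s ⟨⟨hs1, _⟩, (hs2 : s ≤ 2*t)⟩
                exact ⟨by linarith, hs2⟩
          _ = 2*t^δ₂/δ₂ := by
              rw [integral_abs_sub_rpow (by linarith) ht0.le,
                show δ₂ - 1 + 1 = δ₂ by ring]
      have e₄ : (∫ s in Ioc (1:ℝ) T, c₄ * indicator (Ici (2*t)) (fun s => s^(-(β+γ))) s)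
          ≤ c₄ * (t^(-(β+γ)+1)*(1/(β+γ-1))) := by
        rw [integral_const_mul, setIntegral_indicator measurableSet_Ici]
        apply mul_le_mul_of_nonneg_left _ hc₄0
        calc (∫ s in Ioc (1:ℝ) T ∩ Ici (2*t), s^(-(β+γ)))
            ≤ ∫ s in Ioi t, s^(-(β+γ)) := by
              apply setIntegral_mono_set (integrableOn_Ioi_rpow_of_lt (by linarith) ht0)
              · apply (ae_restrict_iff' measurableSet_Ioi).2
                exact ae_of_all _ fun s hs => Real.rpow_nonneg
                  (by linarith [hs.out] : (0:ℝ) ≤ s) _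
              · apply HasSubset.Subset.eventuallyLE
                rintro s ⟨⟨hs1, _⟩, (hs2 : 2*t ≤ s)⟩
                exact (by linarith : t < s)
          _ = t^(-(β+γ)+1)*(1/(β+γ-1)) := by
              rw [integral_Ioi_rpow_of_lt (by linarith) ht0,
                show (-(β+γ)+1 : ℝ) = -(β+γ-1) by ring, neg_div_neg_eq,
                div_eq_mul_one_div]
      have b2 : (∫ s in Ioc (1:ℝ) T, |M s| * g (t - s))
          ≤ c₁ * 2 + c₂ * (t^δ/δ) + c₃ * (2*t^δ₂/δ₂) + c₄ * (t^(-(β+γ)+1)*(1/(β+γ-1))) := by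
        calc (∫ s in Ioc (1:ℝ) T, |M s| * g (t - s))
            ≤ ∫ s in Ioc (1:ℝ) T, (c₁ * indicator (Icc (t-1) (t+1)) (fun _ => (1:ℝ)) s
              + c₂ * indicator (Iic (t/2)) (fun s => s^(δ-1)) s
              + c₃ * indicator (Iic (2*t)) (fun s => |t - s|^(δ₂-1)) s
              + c₄ * indicator (Ici (2*t)) (fun s => s^(-(β+γ))) s) :=
              setIntegral_mono_on (hMg t 1 T) (((hi₁.add hi₂).add hi₃).add hi₄)
                measurableSet_Ioc hptw2
          _ = (∫ s in Ioc (1:ℝ) T, c₁ * indicator (Icc (t-1) (t+1)) (fun _ => (1:ℝ)) s)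
              + (∫ s in Ioc (1:ℝ) T, c₂ * indicator (Iic (t/2)) (fun s => s^(δ-1)) s)
              + (∫ s in Ioc (1:ℝ) T, c₃ * indicator (Iic (2*t)) (fun s => |t - s|^(δ₂-1)) s)
              + (∫ s in Ioc (1:ℝ) T, c₄ * indicator (Ici (2*t)) (fun s => s^(-(β+γ))) s) := by
              have hi₁₂ : IntegrableOn (fun s : ℝ =>
                  c₁ * indicator (Icc (t-1) (t+1)) (fun _ => (1:ℝ)) s
                  + c₂ * indicator (Iic (t/2)) (fun s => s^(δ-1)) s) (Ioc 1 T) volume :=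
                hi₁.add hi₂
              have hi₁₂₃ : IntegrableOn (fun s : ℝ =>
                  c₁ * indicator (Icc (t-1) (t+1)) (fun _ => (1:ℝ)) s
                  + c₂ * indicator (Iic (t/2)) (fun s => s^(δ-1)) s
                  + c₃ * indicator (Iic (2*t)) (fun s => |t - s|^(δ₂-1)) s) (Ioc 1 T) volume :=
                hi₁₂.add hi₃
              rw [integral_add hi₁₂₃ hi₄, integral_add hi₁₂ hi₃, integral_add hi₁ hi₂]
          _ ≤ _ := by
              have := e₁; have := e₂; have := e₃; have := e₄; linarith
      rw [hsplit]
      rw [hc₁def] at e₁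
      rw [hc₂def] at e₂
      rw [hc₃def] at e₃
      rw [hc₄def] at e₄
      rw [hc₁def, hc₂def, hc₃def, hc₄def] at b2
      linarith
    -- pointwise bound on the outer integrand
    set h : ℝ → ℝ := fun t => if t ≤ 1 then |M t| * Csmall else C₃ * t^(ρ-1) with hhdef
    have hbound : ∀ t ∈ Ioc (0:ℝ) T, |∫ s in (0:ℝ)..T, M t * M s * a (t - s)| ≤ h t := by
      rintro t ⟨ht0, htT⟩
      rcases le_or_gt t 1 with ht1 | ht1
      · have : h t = |M t| * Csmall := by rw [hhdef]; exact if_pos ht1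
        rw [this]
        calc |∫ s in (0:ℝ)..T, M t * M s * a (t - s)| ≤ |M t| * Φ t := inner_bound t
          _ ≤ |M t| * Csmall :=
            mul_le_mul_of_nonneg_left (Φ_small t ⟨ht0, ht1⟩) (abs_nonneg _)
      · have hht : h t = C₃ * t^(ρ-1) := by rw [hhdef]; exact if_neg (not_le.mpr ht1)
        rw [hht]
        have ht0' : (0:ℝ) < t := by linarith
        have hMt : |M t| ≤ C₀ * t^(-β) := by
          have := hMb t (by rw [abs_of_pos ht0']; linarith)
          rwa [abs_of_pos ht0'] at this
        have hΦb := Φ_big t ⟨ht1, htT⟩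
        have hprod : ∀ p q : ℝ, t^p * t^q = t^(p+q) := fun p q =>
          (Real.rpow_add ht0' p q).symm
        have hkey : ∀ cc p : ℝ, 0 ≤ cc → p ≤ ρ - 1 → cc * t^p ≤ cc * t^(ρ-1) :=
          fun cc p hcc hp => mul_le_mul_of_nonneg_left
            (Real.rpow_le_rpow_of_exponent_le ht1.le hp) hcc
        calc |∫ s in (0:ℝ)..T, M t * M s * a (t - s)| ≤ |M t| * Φ t := inner_bound t
          _ ≤ (C₀ * t^(-β)) * Φ t := mul_le_mul_of_nonneg_right hMt (hΦ_nonneg t)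
          _ ≤ (C₀ * t^(-β)) * (2^γ*A'*K*t^(-γ) + 2^β*C₀*A'*t^(-β)*2
              + 2^γ*C₀^2*t^(-γ)*(t^δ/δ) + 2^β*C₀^2*t^(-β)*(2*t^δ₂/δ₂)
              + 2^γ*C₀^2*(t^(-(β+γ)+1)*(1/(β+γ-1)))) :=
            mul_le_mul_of_nonneg_left hΦb (by positivity)
          _ = (C₀*t^(-β)) * (2^γ*A'*K*t^(-γ)) + (C₀*t^(-β)) * (2^β*C₀*A'*t^(-β)*2)
              + (C₀*t^(-β)) * (2^γ*C₀^2*t^(-γ)*(t^δ/δ))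
              + (C₀*t^(-β)) * (2^β*C₀^2*t^(-β)*(2*t^δ₂/δ₂))
              + (C₀*t^(-β)) * (2^γ*C₀^2*(t^(-(β+γ)+1)*(1/(β+γ-1)))) := by ring
          _ ≤ (C₀*(2^γ*A'*K)) * t^(ρ-1)
              + (C₀*(2^(β+1)*C₀*A')) * t^(ρ-1)
              + (C₀*(2^γ*C₀^2/δ)) * t^(ρ-1)
              + (C₀*(2^(β+1)*C₀^2/δ₂)) * t^(ρ-1)
              + (C₀*(2^γ*C₀^2*(1/(β+γ-1)))) * t^(ρ-1) := by
              have h2b1 : (2:ℝ)^(β+1) = 2^β * 2 := by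
                rw [Real.rpow_add (by norm_num : (0:ℝ) < 2), Real.rpow_one]
              have nn1 : (0:ℝ) ≤ C₀*(2^γ*A'*K) :=
                mul_nonneg hC₀.le (mul_nonneg (mul_nonneg h2γ.le hA'pos.le) hK0)
              have nn2 : (0:ℝ) ≤ C₀*(2^(β+1)*C₀*A') :=
                mul_nonneg hC₀.le (mul_nonneg (mul_nonneg h2β1.le hC₀.le) hA'pos.le)
              have nn3 : (0:ℝ) ≤ C₀*(2^γ*C₀^2/δ) := by positivity
              have nn4 : (0:ℝ) ≤ C₀*(2^(β+1)*C₀^2/δ₂) := by positivity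
              have nn5 : (0:ℝ) ≤ C₀*(2^γ*C₀^2*(1/(β+γ-1))) := by positivity
              have q1 : (C₀*t^(-β)) * (2^γ*A'*K*t^(-γ)) ≤ (C₀*(2^γ*A'*K)) * t^(ρ-1) := by
                calc (C₀*t^(-β)) * (2^γ*A'*K*t^(-γ))
                    = (C₀*(2^γ*A'*K)) * (t^(-β)*t^(-γ)) := by ring
                  _ = (C₀*(2^γ*A'*K)) * t^(-β + -γ) := by rw [← Real.rpow_add ht0']
                  _ ≤ (C₀*(2^γ*A'*K)) * t^(ρ-1) := hkey _ _ nn1 (by linarith)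
              have q2 : (C₀*t^(-β)) * (2^β*C₀*A'*t^(-β)*2) ≤ (C₀*(2^(β+1)*C₀*A')) * t^(ρ-1) := by
                calc (C₀*t^(-β)) * (2^β*C₀*A'*t^(-β)*2)
                    = (C₀*(2^β*2*C₀*A')) * (t^(-β)*t^(-β)) := by ring
                  _ = (C₀*(2^β*2*C₀*A')) * t^(-β + -β) := by rw [← Real.rpow_add ht0']
                  _ ≤ (C₀*(2^β*2*C₀*A')) * t^(ρ-1) := by
                      apply hkey _ _ _ (by linarith)
                      exact mul_nonneg hC₀.le (mul_nonneg (mul_nonneg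
                        (mul_nonneg h2β.le (by norm_num)) hC₀.le) hA'pos.le)
                  _ = (C₀*(2^(β+1)*C₀*A')) * t^(ρ-1) := by rw [h2b1]
              have q3 : (C₀*t^(-β)) * (2^γ*C₀^2*t^(-γ)*(t^δ/δ))
                  ≤ (C₀*(2^γ*C₀^2/δ)) * t^(ρ-1) := by
                calc (C₀*t^(-β)) * (2^γ*C₀^2*t^(-γ)*(t^δ/δ))
                    = (C₀*(2^γ*C₀^2/δ)) * (t^(-β)*(t^(-γ)*t^δ)) := by ring
                  _ = (C₀*(2^γ*C₀^2/δ)) * t^(-β + (-γ + δ)) := by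
                      rw [Real.rpow_add ht0' (-β) (-γ + δ), Real.rpow_add ht0' (-γ) δ]
                  _ ≤ (C₀*(2^γ*C₀^2/δ)) * t^(ρ-1) :=
                      hkey _ _ nn3 (by rw [hδdef]; linarith)
              have q4 : (C₀*t^(-β)) * (2^β*C₀^2*t^(-β)*(2*t^δ₂/δ₂))
                  ≤ (C₀*(2^(β+1)*C₀^2/δ₂)) * t^(ρ-1) := by
                calc (C₀*t^(-β)) * (2^β*C₀^2*t^(-β)*(2*t^δ₂/δ₂))
                    = (C₀*(2^β*2*C₀^2/δ₂)) * (t^(-β)*(t^(-β)*t^δ₂)) := by ring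
                  _ = (C₀*(2^β*2*C₀^2/δ₂)) * t^(-β + (-β + δ₂)) := by
                      rw [Real.rpow_add ht0' (-β) (-β + δ₂), Real.rpow_add ht0' (-β) δ₂]
                  _ ≤ (C₀*(2^β*2*C₀^2/δ₂)) * t^(ρ-1) := by
                      apply hkey _ _ (by positivity) (by rw [hδ₂def]; linarith)
                  _ = (C₀*(2^(β+1)*C₀^2/δ₂)) * t^(ρ-1) := by rw [h2b1]
              have q5 : (C₀*t^(-β)) * (2^γ*C₀^2*(t^(-(β+γ)+1)*(1/(β+γ-1))))
                  ≤ (C₀*(2^γ*C₀^2*(1/(β+γ-1)))) * t^(ρ-1) := by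
                calc (C₀*t^(-β)) * (2^γ*C₀^2*(t^(-(β+γ)+1)*(1/(β+γ-1))))
                    = (C₀*(2^γ*C₀^2*(1/(β+γ-1)))) * (t^(-β)*t^(-(β+γ)+1)) := by ring
                  _ = (C₀*(2^γ*C₀^2*(1/(β+γ-1)))) * t^(-β + (-(β+γ)+1)) := by
                      rw [← Real.rpow_add ht0']
                  _ ≤ (C₀*(2^γ*C₀^2*(1/(β+γ-1)))) * t^(ρ-1) :=
                      hkey _ _ nn5 (by linarith)
              linarith
          _ = C₃ * t^(ρ-1) := by rw [hC₃def]; ring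
    -- integrability of h
    have hh1 : ∀ t : ℝ, t ≤ 1 → h t = |M t| * Csmall := by
      intro t ht; rw [hhdef]; simp only [if_pos ht]
    have hh2 : ∀ t : ℝ, 1 < t → h t = C₃ * t^(ρ-1) := by
      intro t ht; rw [hhdef]; simp only [if_neg (not_le.mpr ht)]
    have hint1 : IntegrableOn h (Ioc 0 1) volume :=
      IntegrableOn.congr_fun ((hMabs 0 1).mul_const Csmall)
        (fun t ht => (hh1 t ht.2).symm) measurableSet_Ioc
    have hint2 : IntegrableOn h (Ioc 1 T) volume :=
      IntegrableOn.congr_fun ((rpow_integrableOn_Ioc (by linarith : (-1:ℝ) < ρ-1) 1 T).const_mul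
        C₃) (fun t ht => (hh2 t ht.1).symm) measurableSet_Ioc
    have hint : IntegrableOn h (Ioc 0 T) volume := by
      rw [← Ioc_union_Ioc_eq_Ioc (by norm_num : (0:ℝ) ≤ 1) hT1]
      exact hint1.union hint2
    -- conclusion
    have hIle : |∫ t in (0:ℝ)..T, ∫ s in (0:ℝ)..T, M t * M s * a (t - s)|
        ≤ ∫ t in Ioc (0:ℝ) T, h t := by
      rw [intervalIntegral.integral_of_le hT0.le, ← Real.norm_eq_abs]
      apply norm_integral_le_of_norm_le hint
      apply (ae_restrict_iff' measurableSet_Ioc).2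
      exact ae_of_all _ fun t ht => by
        rw [Real.norm_eq_abs]; exact hbound t ht
    have hhsplit : (∫ t in Ioc (0:ℝ) T, h t)
        = (∫ t in Ioc (0:ℝ) 1, h t) + ∫ t in Ioc (1:ℝ) T, h t := by
      rw [← Ioc_union_Ioc_eq_Ioc (by norm_num : (0:ℝ) ≤ 1) hT1,
        setIntegral_union (Ioc_disjoint_Ioc_of_le le_rfl) measurableSet_Ioc hint1 hint2]
    have hval1 : (∫ t in Ioc (0:ℝ) 1, h t) = K * Csmall := by
      rw [setIntegral_congr_fun measurableSet_Ioc
        (fun t ht => hh1 t ht.2 : EqOn h (fun t => |M t| * Csmall) (Ioc 0 1)),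
        integral_mul_const, hKdef]
    have hval2 : (∫ t in Ioc (1:ℝ) T, h t) = C₃ * ((T^ρ - 1)/ρ) := by
      rw [setIntegral_congr_fun measurableSet_Ioc
        (fun t ht => hh2 t ht.1 : EqOn h (fun t => C₃ * t^(ρ-1)) (Ioc 1 T)),
        integral_const_mul, ← intervalIntegral.integral_of_le hT1,
        integral_rpow (Or.inl (by linarith)),
        show ρ - 1 + 1 = ρ by ring, Real.one_rpow]
    have hTρ1 : (1:ℝ) ≤ T^ρ := by
      calc (1:ℝ) = 1^ρ := (Real.one_rpow ρ).symm
        _ ≤ T^ρ := Real.rpow_le_rpow (by norm_num) hT1 hρ3.le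
    calc |∫ t in (0:ℝ)..T, ∫ s in (0:ℝ)..T, M t * M s * a (t - s)|
        ≤ ∫ t in Ioc (0:ℝ) T, h t := hIle
      _ = K * Csmall + C₃ * ((T^ρ - 1)/ρ) := by rw [hhsplit, hval1, hval2]
      _ ≤ K * Csmall * T^ρ + (C₃/ρ) * T^ρ := by
          have l1 : K * Csmall ≤ K * Csmall * T^ρ :=
            le_mul_of_one_le_right (mul_nonneg hK0 hCsmall0) hTρ1
          have l2 : C₃ * ((T^ρ - 1)/ρ) ≤ (C₃/ρ) * T^ρ := by
            rw [show C₃ * ((T^ρ - 1)/ρ) = (C₃/ρ) * (T^ρ - 1) by ring]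
            apply mul_le_mul_of_nonneg_left (by linarith) (by positivity)
          exact add_le_add l1 l2
      _ = C₄ * T^ρ := by rw [hC₄def]; ring
  -- squeeze
  apply squeeze_zero_norm' (a := fun T : ℝ => C₄ * T^(ρ - 1/2))
  · filter_upwards [eventually_ge_atTop (2:ℝ)] with T hT
    have hT0 : (0:ℝ) < T := by linarith
    rw [Real.norm_eq_abs, abs_mul, abs_of_nonneg (Real.rpow_nonneg hT0.le _)]
    calc T ^ (-(1/2:ℝ)) * |∫ t in (0:ℝ)..T, ∫ s in (0:ℝ)..T, M t * M s * a (t - s)|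
        ≤ T ^ (-(1/2:ℝ)) * (C₄ * T^ρ) :=
          mul_le_mul_of_nonneg_left (main T hT) (Real.rpow_nonneg hT0.le _)
      _ = C₄ * T^(ρ - 1/2) := by
          rw [show ρ - 1/2 = -(1/2) + ρ by ring, Real.rpow_add hT0]; ring
  · have h := (tendsto_rpow_neg_atTop (by linarith : (0:ℝ) < 1/2 - ρ)).const_mul C₄
    rw [mul_zero] at h
    convert h using 2 with T
    rw [show ρ - 1/2 = -(1/2 - ρ) by ring]
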